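/- Let F(h) be the restriction of D(H) = ‖V − (W∘L)H‖_F² to the coordinate H_{rj} = h, and define G(h, h₀) = F(h₀) + F'(h₀)(h − h₀) + ([(W∘L)ᵀ(W∘L)H₀]_{rj}/h₀)(h − h₀)² where H₀ agrees with H and (H₀)_{rj} = h₀ > 0, and all matrices V, W, L, H are entrywise nonnegative. Then G(h, h₀) ≥ F(h) for all h and G(h₀, h₀) = F(h₀); i.e., G is an auxiliary function for F. -/

import Mathlib

open Matrix BigOperators

/-- The TS-NMF auxiliary function for the coordinate `H r j`:
`G(h, h₀) = F(h₀) + F'(h₀)(h − h₀) + ([(W∘L)ᵀ(W∘L)H₀]_{rj}/h₀)(h − h₀)²`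
satisfies `G(h, h₀) ≥ F(h)` for all `h` and `G(h₀, h₀) = F(h₀)`. -/
theorem tsnmf_auxiliary_function (n t d : ℕ)
    (V : Matrix (Fin n) (Fin t) ℝ) (W L : Matrix (Fin n) (Fin d) ℝ)
    (H : Matrix (Fin d) (Fin t) ℝ)
    (hV : ∀ i j, 0 ≤ V i j) (hW : ∀ i r, 0 ≤ W i r) (hL : ∀ i r, 0 ≤ L i r)
    (hH : ∀ r j, 0 ≤ H r j)
    (r : Fin d) (j : Fin t) (h₀ : ℝ) (hh₀ : 0 < h₀)
    (F : ℝ → ℝ)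
    (hF : ∀ h, F h = ∑ i, ∑ j', ((V - (W ⊙ L) *
      (Matrix.of fun r' j' => if r' = r ∧ j' = j then h else H r' j')) i j') ^ 2)
    (H₀ : Matrix (Fin d) (Fin t) ℝ)
    (hH₀ : H₀ = Matrix.of fun r' j' => if r' = r ∧ j' = j then h₀ else H r' j')
    (G : ℝ → ℝ → ℝ)
    (hG : ∀ h, G h h₀ = F h₀ + deriv F h₀ * (h - h₀) +
      (((W ⊙ L)ᵀ * (W ⊙ L) * H₀) r j / h₀) * (h - h₀) ^ 2) :
    (∀ h, F h ≤ G h h₀) ∧ G h₀ h₀ = F h₀ := by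
  set M : Matrix (Fin n) (Fin d) ℝ := W ⊙ L with hM
  have hMnn : ∀ i k, 0 ≤ M i k := fun i k => mul_nonneg (hW i k) (hL i k)
  set a : Fin n → ℝ := fun i => M i r with ha
  set α : ℝ := ∑ i, (a i) ^ 2 with hα
  set u : Matrix (Fin n) (Fin t) ℝ := V - M * H₀ with hu
  set P : ℝ := ∑ i, ∑ j', (u i j') ^ 2 with hP
  set Q : ℝ := ∑ i, (-2 * u i j * a i) with hQ
  -- entrywise formula
  have entry : ∀ (h : ℝ) (i : Fin n) (j' : Fin t),
      (V - M * (Matrix.of fun r' j' => if r' = r ∧ j' = j then h else H r' j')) i j'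
        = u i j' - (if j' = j then a i * (h - h₀) else 0) := by
    intro h i j'
    simp only [hu, Matrix.sub_apply, Matrix.mul_apply, hH₀, Matrix.of_apply]
    by_cases hj : j' = j
    · subst hj
      simp only [and_true, if_true]
      have hs : (∑ x, M i x * (if x = r then h else H x j')) -
          (∑ x, M i x * (if x = r then h₀ else H x j')) = a i * (h - h₀) := by
        rw [← Finset.sum_sub_distrib]
        have : ∀ k ∈ Finset.univ, M i k * (if k = r then h else H k j') -
            M i k * (if k = r then h₀ else H k j') =
            (if k = r then a i * (h - h₀) else 0) := by
          intro k _
          by_cases hk : k = r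
          · subst hk; simp only [if_true, ha]; ring
          · simp [hk]
        rw [Finset.sum_congr rfl this, Finset.sum_ite_eq' Finset.univ r]
        simp
      linarith [hs]
    · simp [hj]
  -- quadratic form of F
  have key : ∀ h, F h = P + Q * (h - h₀) + α * (h - h₀) ^ 2 := by
    intro h
    rw [hF]
    have : ∀ i : Fin n, ∑ j', ((V - M * (Matrix.of fun r' j' =>
        if r' = r ∧ j' = j then h else H r' j')) i j') ^ 2
        = (∑ j', (u i j') ^ 2) + (-2 * u i j * a i) * (h - h₀) + (a i)^2 * (h - h₀)^2 := by
      intro i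
      simp only [entry h i]
      have expand : ∀ j' : Fin t,
          (u i j' - (if j' = j then a i * (h - h₀) else 0)) ^ 2
          = (u i j')^2 + (if j' = j then (-2 * u i j * a i) * (h - h₀) + (a i)^2 * (h-h₀)^2 else 0) := by
        intro j'
        by_cases hj : j' = j
        · subst hj; simp; ring
        · simp [hj]
      simp only [expand, Finset.sum_add_distrib, Finset.sum_ite_eq' Finset.univ j,
        Finset.mem_univ, if_true]
      ring
    rw [Finset.sum_congr rfl (fun i _ => this i), Finset.sum_add_distrib,
      Finset.sum_add_distrib, ← Finset.sum_mul, ← Finset.sum_mul]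
  have hFh₀ : F h₀ = P := by rw [key h₀]; ring
  -- derivative
  have hd : HasDerivAt F Q h₀ := by
    have hfun : F = fun h => P + Q * (h - h₀) + α * (h - h₀) ^ 2 := funext key
    rw [hfun]
    have h1 : HasDerivAt (fun h : ℝ => h - h₀) 1 h₀ := (hasDerivAt_id h₀).sub_const h₀
    have h2 : HasDerivAt (fun h : ℝ => Q * (h - h₀)) Q h₀ := by
      simpa using h1.const_mul Q
    have h3 : HasDerivAt (fun h : ℝ => (h - h₀) ^ 2) 0 h₀ := by
      simpa using h1.fun_pow 2
    have h4 := ((hasDerivAt_const h₀ P).fun_add h2).fun_add (h3.const_mul α)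
    simpa using h4
  have hderiv : deriv F h₀ = Q := hd.deriv
  -- key inequality  K ≥ α h₀
  set K : ℝ := ((Mᵀ * M * H₀)) r j with hK
  have hKge : α * h₀ ≤ K := by
    have hexp : K = ∑ k, (∑ i, M i r * M i k) * H₀ k j := by
      simp [hK, Matrix.mul_apply, Matrix.transpose_apply]
    rw [hexp]
    have hterm : (∑ i, M i r * M i r) * H₀ r j = α * h₀ := by
      simp [hH₀, hα, ha, sq]
    rw [← hterm]
    refine Finset.single_le_sum (f := fun k => (∑ i, M i r * M i k) * H₀ k j) (fun k _ => ?_) (Finset.mem_univ r)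
    refine mul_nonneg (Finset.sum_nonneg fun i _ => mul_nonneg (hMnn i r) (hMnn i k)) ?_
    rw [hH₀]
    simp only [Matrix.of_apply, and_true]
    by_cases hk : k = r
    · simp [hk, hh₀.le]
    · simp [hk, hH k j]
  have hαK : α ≤ K / h₀ := (le_div_iff₀ hh₀).mpr hKge
  constructor
  · intro h
    rw [hG, key h, hFh₀, hderiv]
    have : α * (h - h₀)^2 ≤ K / h₀ * (h - h₀)^2 :=
      mul_le_mul_of_nonneg_right hαK (sq_nonneg _)
    linarith
  · rw [hG, key h₀]; ring
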